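/- For every n ≥ 1 and every locally admissible n-block p of Δ (i.e., a pattern on ⟦0,n−1⟧² over {→,↓} containing no forbidden pattern of Δ), there exists a rectangular pattern Q appearing in a configuration of Δ which has p as a sub-pattern, whose width and height are each at most 5n, whose topmost and bottommost rows consist only of → symbols, and in which the number of curves crossing Q equals the number of columns of Q. In particular every locally admissible pattern of Δ is globally admissible (appears in a configuration of Δ). -/

import Mathlib

open Filter

abbrev Config (A : Type*) := ℤ × ℤ → A

def shiftC {A : Type*} (u : ℤ × ℤ) (x : Config A) : Config A := fun v => x (v + u)

def blockAt {A : Type*} (x : Config A) (u : ℤ × ℤ) (n : ℕ) : Fin n × Fin n → A :=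
  fun v => x (u + (((v.1 : ℕ) : ℤ), ((v.2 : ℕ) : ℤ)))

def IsSFT {A : Type*} (X : Set (Config A)) : Prop :=
  ∃ (r : ℕ) (F : Set (Fin r × Fin r → A)),
    X = {x : Config A | ∀ u : ℤ × ℤ, blockAt x u r ∉ F}

def Lang {A : Type*} (X : Set (Config A)) (n : ℕ) : Set (Fin n × Fin n → A) :=
  {p | ∃ x ∈ X, ∃ u : ℤ × ℤ, blockAt x u n = p}

def gluingSet {A : Type*} (X : Set (Config A)) {n : ℕ}
    (p q : Fin n × Fin n → A) : Set (ℤ × ℤ) :=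
  {u | ∃ x ∈ X, blockAt x 0 n = q ∧ blockAt x u n = p}

def normInf (u : ℤ × ℤ) : ℤ := max |u.1| |u.2|

def BlockGluing {A : Type*} (X : Set (Config A)) (f : ℕ → ℕ) : Prop :=
  ∀ n : ℕ, 1 ≤ n → ∀ p ∈ Lang X n, ∀ q ∈ Lang X n, ∀ u : ℤ × ℤ,
    (f n : ℤ) + (n : ℤ) ≤ normInf u → u ∈ gluingSet X p q

/-- The local rules of the SFT `Δ` on alphabet `{→, ↓}` (`true` = `→`, `false` = `↓`):
no `↓` directly above a `↓`, and the 2×2 pattern with bottom row `(→,→)` and top row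
`(→,↓)` is forbidden. -/
def DeltaRules (δ : Config Bool) : Prop :=
  ∀ u : ℤ × ℤ,
    ¬(δ u = false ∧ δ (u + (0, 1)) = false) ∧
    ¬(δ u = true ∧ δ (u + (1, 0)) = true ∧ δ (u + (0, 1)) = true ∧
      δ (u + (1, 1)) = false)

/-- Successor along a curve: from a `→`-position `i`, go to `i+(1,-1)` if the symbol on
the right of `i` is `↓`, and to `i+(1,0)` otherwise. -/
def succPos (δ : Config Bool) (i : ℤ × ℤ) : ℤ × ℤ :=
  if δ (i + (1, 0)) = true then i + (1, 0) else i + (1, -1)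

/-- Predecessor along a curve. -/
def predPos (δ : Config Bool) (i : ℤ × ℤ) : ℤ × ℤ :=
  if δ (i + (-1, 0)) = true then i + (-1, 0) else i + (-1, 1)

/-- The lowest `→`-position of column `0` among `(0,0)`, `(0,1)`. -/
def colBase (δ : Config Bool) : ℤ := if δ (0, 0) = true then 0 else 1

/-- Enumeration, upwards, of the `→`-positions of column 0 starting from the base. -/
def colUp (δ : Config Bool) : ℕ → ℤ
  | 0 => colBase δ
  | k + 1 => if δ (0, colUp δ k + 1) = true then colUp δ k + 1 else colUp δ k + 2

/-- Enumeration, downwards, of the `→`-positions of column 0 starting from the base. -/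
def colDown (δ : Config Bool) : ℕ → ℤ
  | 0 => colBase δ
  | k + 1 => if δ (0, colDown δ k - 1) = true then colDown δ k - 1 else colDown δ k - 2

/-- The height of the `k`-th `→`-position of column 0 (`k ∈ ℤ`), counting from the base. -/
def colEnum (δ : Config Bool) (k : ℤ) : ℤ :=
  if 0 ≤ k then colUp δ k.toNat else colDown δ (-k).toNat

/-- `curvePos δ k i` is `φ_{δ,k}(i)`: the `i`-th position of the `k`-th curve of `δ`. -/
def curvePos (δ : Config Bool) (k i : ℤ) : ℤ × ℤ :=
  if 0 ≤ i then (succPos δ)^[i.toNat] ((0 : ℤ), colEnum δ k)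
  else (predPos δ)^[(-i).toNat] ((0 : ℤ), colEnum δ k)

/-- One step along a curve: `j` is the successor of the `→`-position `i`. -/
def curveStep (δ : Config Bool) (i j : ℤ × ℤ) : Prop :=
  δ i = true ∧ j = succPos δ i

/-- The curve through the `→`-position `i`: the connected component of `i` under the
successor relation. -/
def curveOf (δ : Config Bool) (i : ℤ × ℤ) : Set (ℤ × ℤ) :=
  {j | Relation.EqvGen (curveStep δ) i j}

/-- The set of curves of `δ` meeting the set `S`. -/
def curvesThrough (δ : Config Bool) (S : Set (ℤ × ℤ)) : Set (Set (ℤ × ℤ)) :=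
  {c | ∃ i ∈ S, δ i = true ∧ c = curveOf δ i}

def boxSet (n : ℕ) : Set (ℤ × ℤ) :=
  {v | 0 ≤ v.1 ∧ v.1 < (n : ℤ) ∧ 0 ≤ v.2 ∧ v.2 < (n : ℤ)}

def rectSet (w h : ℕ) : Set (ℤ × ℤ) :=
  {v | 0 ≤ v.1 ∧ v.1 < (w : ℤ) ∧ 0 ≤ v.2 ∧ v.2 < (h : ℤ)}

/-- A (square) block over `{→,↓}` is locally admissible for `Δ` if no forbidden pattern
of `Δ` occurs inside it. -/
def LocallyAdmissible (n : ℕ) (p : Fin n × Fin n → Bool) : Prop :=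
  (∀ (i j : ℕ) (hi : i < n) (hj : j + 1 < n),
      ¬(p (⟨i, hi⟩, ⟨j, by omega⟩) = false ∧ p (⟨i, hi⟩, ⟨j + 1, hj⟩) = false)) ∧
  (∀ (i j : ℕ) (hi : i + 1 < n) (hj : j + 1 < n),
      ¬(p (⟨i, by omega⟩, ⟨j, by omega⟩) = true ∧
        p (⟨i + 1, hi⟩, ⟨j, by omega⟩) = true ∧
        p (⟨i, by omega⟩, ⟨j + 1, hj⟩) = true ∧
        p (⟨i + 1, hi⟩, ⟨j + 1, hj⟩) = false))

namespace Stmt12Aux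

open Function

set_option linter.unusedSectionVars false

section Dyn

variable {δ : Config Bool} (hδ : DeltaRules δ)

include hδ

lemma rule1' {a b : ℤ} (h : δ (a, b) = false) : δ (a, b + 1) = true := by
  have := (hδ (a, b)).1
  rw [show ((a,b) : ℤ × ℤ) + (0,1) = (a, b+1) by
    simp only [Prod.mk_add_mk]; congr 1 <;> ring] at this
  cases hb : δ (a, b+1) with
  | false => exact absurd ⟨h, hb⟩ this
  | true => rfl

lemma del_supp' {a b : ℤ} (h : δ (a, b) = false) :
    δ (a - 1, b) = false ∨ δ (a - 1, b - 1) = false := by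
  by_contra hc
  push_neg at hc
  obtain ⟨h1, h2⟩ := hc
  simp only [ne_eq, Bool.not_eq_false] at h1 h2
  have h3 : δ (a, b - 1) = true := by
    cases hb : δ (a, b - 1) with
    | false => have := rule1' hδ hb; rw [show b - 1 + 1 = b by ring] at this; simp [this] at h
    | true => rfl
  have := (hδ (a - 1, b - 1)).2
  rw [show ((a-1,b-1) : ℤ × ℤ) + (1,0) = (a, b-1) by
        simp only [Prod.mk_add_mk]; congr 1 <;> ring,
      show ((a-1,b-1) : ℤ × ℤ) + (0,1) = (a-1, b) by
        simp only [Prod.mk_add_mk]; congr 1 <;> ring,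
      show ((a-1,b-1) : ℤ × ℤ) + (1,1) = (a, b) by
        simp only [Prod.mk_add_mk]; congr 1 <;> ring] at this
  exact this ⟨h2, h3, h1, h⟩

omit hδ in
lemma succ_pair (a b : ℤ) :
    succPos δ (a, b) = if δ (a + 1, b) = true then (a + 1, b) else (a + 1, b - 1) := by
  unfold succPos
  rw [show ((a,b) : ℤ × ℤ) + (1,0) = (a+1, b) by
        simp only [Prod.mk_add_mk]; congr 1 <;> ring,
      show ((a,b) : ℤ × ℤ) + (1,-1) = (a+1, b-1) by
        simp only [Prod.mk_add_mk]; congr 1 <;> ring]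

omit hδ in
lemma pred_pair (a b : ℤ) :
    predPos δ (a, b) = if δ (a - 1, b) = true then (a - 1, b) else (a - 1, b + 1) := by
  unfold predPos
  rw [show ((a,b) : ℤ × ℤ) + (-1,0) = (a-1, b) by
        simp only [Prod.mk_add_mk]; congr 1 <;> ring,
      show ((a,b) : ℤ × ℤ) + (-1,1) = (a-1, b+1) by
        simp only [Prod.mk_add_mk]; congr 1 <;> ring]

lemma succ_true {i : ℤ × ℤ} (h : δ i = true) : δ (succPos δ i) = true := by
  obtain ⟨a, b⟩ := i
  rw [succ_pair]
  cases hr : δ (a + 1, b) with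
  | true => simpa [hr] using hr
  | false =>
    simp only [hr, Bool.false_eq_true, if_false]
    cases hd : δ (a + 1, b - 1) with
    | true => rfl
    | false =>
      have := rule1' hδ hd
      rw [show b - 1 + 1 = b by ring] at this
      simp [this] at hr

omit hδ in
lemma succ_fst (i : ℤ × ℤ) : (succPos δ i).1 = i.1 + 1 := by
  obtain ⟨a, b⟩ := i
  rw [succ_pair]; split <;> rfl

omit hδ in
lemma pred_fst (i : ℤ × ℤ) : (predPos δ i).1 = i.1 - 1 := by
  obtain ⟨a, b⟩ := i
  rw [pred_pair]; split <;> rfl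

lemma pred_true {i : ℤ × ℤ} (h : δ i = true) : δ (predPos δ i) = true := by
  obtain ⟨a, b⟩ := i
  rw [pred_pair]
  cases hl : δ (a - 1, b) with
  | true => simp [hl]
  | false => simp [hl, rule1' hδ hl]

lemma pred_succ {i : ℤ × ℤ} (h : δ i = true) : predPos δ (succPos δ i) = i := by
  obtain ⟨a, b⟩ := i
  rw [succ_pair]
  cases hr : δ (a + 1, b) with
  | true =>
    simp only [hr, if_true, pred_pair]
    rw [show a + 1 - 1 = a by ring, h]
    simp
  | false =>
    simp only [hr, Bool.false_eq_true, if_false, pred_pair]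
    have hd : δ (a + 1 - 1, b - 1) = false := by
      rw [show a + 1 - 1 = a by ring]
      by_contra hc
      rw [Bool.not_eq_false] at hc
      have hsb : δ (a + 1, b - 1) = true := by
        cases hx : δ (a + 1, b - 1) with
        | true => rfl
        | false =>
          have := rule1' hδ hx; rw [show b - 1 + 1 = b by ring] at this; simp [this] at hr
      have := (hδ (a, b - 1)).2
      rw [show ((a,b-1) : ℤ × ℤ) + (1,0) = (a+1, b-1) by
            simp only [Prod.mk_add_mk]; congr 1 <;> ring,
          show ((a,b-1) : ℤ × ℤ) + (0,1) = (a, b) by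
            simp only [Prod.mk_add_mk]; congr 1 <;> ring,
          show ((a,b-1) : ℤ × ℤ) + (1,1) = (a+1, b) by
            simp only [Prod.mk_add_mk]; congr 1 <;> ring] at this
      exact this ⟨hc, hsb, h, hr⟩
    simp only [hd, Bool.false_eq_true, if_false]
    congr 1 <;> ring

/-- A position with no predecessor on its curve. -/
def IsStart (δ : Config Bool) (i : ℤ × ℤ) : Prop :=
  δ i = true ∧ δ (i.1 - 1, i.2) = false ∧ δ (i.1, i.2 + 1) = true

lemma succ_pred {i : ℤ × ℤ} (h : δ i = true) (h2 : ¬ IsStart δ i) :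
    succPos δ (predPos δ i) = i := by
  obtain ⟨a, b⟩ := i
  rw [pred_pair]
  cases hl : δ (a - 1, b) with
  | true =>
    simp only [hl, if_true, succ_pair]
    rw [show a - 1 + 1 = a by ring, h]
    simp
  | false =>
    simp only [hl, Bool.false_eq_true, if_false, succ_pair]
    have hup : δ (a, b + 1) = false := by
      cases hx : δ (a, b + 1) with
      | true => exact absurd ⟨h, hl, hx⟩ h2
      | false => rfl
    rw [show a - 1 + 1 = a by ring]
    simp only [hup, Bool.false_eq_true, if_false]
    congr 1 <;> ring

omit hδ in
lemma no_preimage_of_start {i j : ℤ × ℤ} (hj : δ j = true) (hst : IsStart δ i) :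
    succPos δ j ≠ i := by
  obtain ⟨a, b⟩ := i
  obtain ⟨hT, hF, hU⟩ := hst
  simp only at hF hU
  obtain ⟨c, d⟩ := j
  rw [succ_pair]
  cases hr : δ (c + 1, d) with
  | true =>
    simp only [hr, if_true]
    intro he
    rw [Prod.mk.injEq] at he
    obtain ⟨h1, h2⟩ := he
    have : δ (c, d) = δ (a - 1, b) := by rw [show (a:ℤ) - 1 = c by omega, h2]
    rw [hj, hF] at this; simp at this
  | false =>
    simp only [hr, Bool.false_eq_true, if_false]
    intro he
    rw [Prod.mk.injEq] at he
    obtain ⟨h1, h2⟩ := he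
    have : δ (c + 1, d) = δ (a, b + 1) := by
      rw [show (a:ℤ) = c + 1 by omega, show (b:ℤ) + 1 = d by omega]
    rw [hr, hU] at this; simp at this

lemma iter_true {i : ℤ × ℤ} (h : δ i = true) (k : ℕ) : δ ((succPos δ)^[k] i) = true := by
  induction k with
  | zero => simpa using h
  | succ k ih => rw [Function.iterate_succ_apply']; exact succ_true hδ ih

omit hδ in
lemma iter_fst (i : ℤ × ℤ) (k : ℕ) : ((succPos δ)^[k] i).1 = i.1 + k := by
  induction k with
  | zero => simp
  | succ k ih => rw [Function.iterate_succ_apply', succ_fst, ih]; push_cast; ring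

lemma iter_inj {i j : ℤ × ℤ} (hi : δ i = true) (hj : δ j = true) (k : ℕ)
    (h : (succPos δ)^[k] i = (succPos δ)^[k] j) : i = j := by
  induction k with
  | zero => simpa using h
  | succ k ih =>
    apply ih
    rw [Function.iterate_succ_apply', Function.iterate_succ_apply'] at h
    have := congrArg (predPos δ) h
    rwa [pred_succ hδ (iter_true hδ hi k), pred_succ hδ (iter_true hδ hj k)] at this

/-- Two positions lie on the same curve. -/
def Good (δ : Config Bool) (i j : ℤ × ℤ) : Prop :=
  i = j ∨ (δ i = true ∧ δ j = true ∧
    ∃ a b : ℕ, (succPos δ)^[a] i = (succPos δ)^[b] j)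

omit hδ in
lemma good_refl (i : ℤ × ℤ) : Good δ i i := Or.inl rfl

omit hδ in
lemma good_symm {i j : ℤ × ℤ} (h : Good δ i j) : Good δ j i := by
  rcases h with h | ⟨h1, h2, a, b, h3⟩
  · exact Or.inl h.symm
  · exact Or.inr ⟨h2, h1, b, a, h3.symm⟩

omit hδ in
lemma good_trans {i j k : ℤ × ℤ} (h : Good δ i j) (h' : Good δ j k) : Good δ i k := by
  rcases h with rfl | ⟨h1, h2, a, b, h3⟩
  · exact h'
  rcases h' with rfl | ⟨h1', h2', c, d, h3'⟩
  · exact Or.inr ⟨h1, h2, a, b, h3⟩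
  refine Or.inr ⟨h1, h2', c + a, b + d, ?_⟩
  rw [Function.iterate_add_apply, h3, ← Function.iterate_add_apply, Nat.add_comm c b,
      Function.iterate_add_apply, h3', ← Function.iterate_add_apply]

lemma eqvGen_imp_good {i j : ℤ × ℤ} (h : Relation.EqvGen (curveStep δ) i j) :
    Good δ i j := by
  induction h with
  | rel a b hab =>
    obtain ⟨ha, hb⟩ := hab
    exact Or.inr ⟨ha, hb ▸ succ_true hδ ha, 1, 0, by simp [hb]⟩
  | refl a => exact good_refl a
  | symm a b _ ih => exact good_symm ih
  | trans a b c _ _ ih1 ih2 => exact good_trans ih1 ih2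

lemma eqvGen_iter {i : ℤ × ℤ} (h : δ i = true) (k : ℕ) :
    Relation.EqvGen (curveStep δ) i ((succPos δ)^[k] i) := by
  induction k with
  | zero => exact Relation.EqvGen.refl i
  | succ k ih =>
    refine Relation.EqvGen.trans _ _ _ ih (Relation.EqvGen.rel _ _ ?_)
    exact ⟨iter_true hδ h k, Function.iterate_succ_apply' _ _ _⟩

lemma good_imp_eqvGen {i j : ℤ × ℤ} (h : Good δ i j) :
    Relation.EqvGen (curveStep δ) i j := by
  rcases h with rfl | ⟨h1, h2, a, b, h3⟩
  · exact Relation.EqvGen.refl i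
  refine Relation.EqvGen.trans _ _ _ (eqvGen_iter hδ h1 a) ?_
  rw [h3]
  exact Relation.EqvGen.symm _ _ (eqvGen_iter hδ h2 b)

omit hδ in
lemma curveOf_eq_of_eqvGen {i j : ℤ × ℤ} (h : Relation.EqvGen (curveStep δ) i j) :
    curveOf δ i = curveOf δ j := by
  ext k
  exact ⟨fun hk => Relation.EqvGen.trans _ _ _ (Relation.EqvGen.symm _ _ h) hk,
    fun hk => Relation.EqvGen.trans _ _ _ h hk⟩

omit hδ in
lemma eqvGen_of_curveOf_eq {i j : ℤ × ℤ} (h : curveOf δ i = curveOf δ j) :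
    Relation.EqvGen (curveStep δ) i j := by
  have hj : j ∈ curveOf δ j := Relation.EqvGen.refl j
  rw [← h] at hj
  exact hj

lemma good_cases {i j : ℤ × ℤ} (hi : δ i = true) (hj : δ j = true) (h : Good δ i j) :
    ∃ c : ℕ, (succPos δ)^[c] i = j ∨ (succPos δ)^[c] j = i := by
  rcases h with rfl | ⟨_, _, a, b, h3⟩
  · exact ⟨0, Or.inl rfl⟩
  rcases Nat.le_total b a with hba | hab
  · refine ⟨a - b, Or.inl ?_⟩
    apply iter_inj hδ (iter_true hδ hi _) hj b
    rw [← Function.iterate_add_apply, Nat.add_sub_cancel' hba, h3]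
  · refine ⟨b - a, Or.inr ?_⟩
    apply iter_inj hδ (iter_true hδ hj _) hi a
    rw [← Function.iterate_add_apply, Nat.add_sub_cancel' hab, h3.symm]

lemma start_iter_zero {i j : ℤ × ℤ} (hi : δ i = true) (hst : IsStart δ j) (c : ℕ)
    (h : (succPos δ)^[c] i = j) : c = 0 := by
  cases c with
  | zero => rfl
  | succ c =>
    rw [Function.iterate_succ_apply'] at h
    exact absurd h (no_preimage_of_start (iter_true hδ hi c) hst)

end Dyn

end Stmt12Aux

namespace Stmt12Aux

section Del

variable (n : ℕ) (p : Fin n × Fin n → Bool)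

/-- The block `p` extended by `→` to the whole plane. -/
def pb (x y : ℤ) : Bool :=
  if h : 0 ≤ x ∧ x < (n : ℤ) ∧ 0 ≤ y ∧ y < (n : ℤ) then
    p (⟨x.toNat, by omega⟩, ⟨y.toNat, by omega⟩) else true

/-- `z` starts a down-left diagonal of `↓`s below the box. -/
def isD0 (z : ℤ) : Bool :=
  decide (1 ≤ z) && pb n p (z - 1) 0 && !(pb n p z 0)

/-- The configuration extending `p`: copies of column `0` of `p` to the left,
diagonals of `↓`s supporting the unsupported `↓`s of row `0` below, `→`s elsewhere. -/
def del : Config Bool := fun v =>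
  if v.2 < 0 then !(isD0 n p (v.1 - v.2))
  else if v.2 < (n : ℤ) then pb n p (max v.1 0) v.2
  else true

variable {n p}

lemma pb_false_box {x y : ℤ} (h : pb n p x y = false) :
    0 ≤ x ∧ x < (n : ℤ) ∧ 0 ≤ y ∧ y < (n : ℤ) := by
  by_contra hc
  rw [pb, dif_neg hc] at h
  simp at h

lemma pb_nat (a b : ℕ) (ha : a < n) (hb : b < n) :
    pb n p (a : ℤ) (b : ℤ) = p (⟨a, ha⟩, ⟨b, hb⟩) := by
  rw [pb, dif_pos (by push_cast; omega)]
  congr 1 <;> simp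

lemma del_neg {x y : ℤ} (hy : y < 0) : del n p (x, y) = !(isD0 n p (x - y)) := by
  rw [del, if_pos hy]

lemma del_mid {x y : ℤ} (hy : 0 ≤ y) (hy' : y < (n : ℤ)) :
    del n p (x, y) = pb n p (max x 0) y := by
  rw [del]
  simp only [show ¬(y < 0) by omega, if_false, if_pos hy']

lemma del_hi {x y : ℤ} (hy : (n : ℤ) ≤ y) : del n p (x, y) = true := by
  rw [del]
  simp only [show ¬(y < 0) by omega, if_false, show ¬(y < (n:ℤ)) by omega, if_false]

lemma del_box {x y : ℤ} (hx : 0 ≤ x) (hy : 0 ≤ y) (hy' : y < (n : ℤ)) :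
    del n p (x, y) = pb n p x y := by
  rw [del_mid hy hy', max_eq_left hx]

lemma del_false_lt {x y : ℤ} (h : del n p (x, y) = false) : y < (n : ℤ) := by
  by_contra hc
  rw [del_hi (by omega)] at h
  exact absurd h (by simp)

lemma isD0_range {z : ℤ} (h : isD0 n p z = true) :
    1 ≤ z ∧ z < (n : ℤ) ∧ pb n p (z - 1) 0 = true ∧ pb n p z 0 = false := by
  rw [isD0] at h
  simp only [Bool.and_eq_true, decide_eq_true_eq, Bool.not_eq_true'] at h
  exact ⟨h.1.1, (pb_false_box h.2).2.1, h.1.2, h.2⟩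

variable (hadm : LocallyAdmissible n p)
include hadm

lemma pb_vert {x y : ℤ} (h : pb n p x y = false) : pb n p x (y + 1) = true := by
  obtain ⟨hx, hx', hy, hy'⟩ := pb_false_box h
  obtain ⟨a, rfl⟩ : ∃ a : ℕ, x = (a : ℤ) := ⟨x.toNat, by omega⟩
  obtain ⟨b, rfl⟩ : ∃ b : ℕ, y = (b : ℤ) := ⟨y.toNat, by omega⟩
  have ha : a < n := by omega
  have hb : b < n := by omega
  rcases lt_or_ge (b + 1) n with hb1 | hb1
  · rw [show ((b : ℤ) + 1) = ((b + 1 : ℕ) : ℤ) by push_cast; ring]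
    rw [pb_nat a (b + 1) ha hb1]
    rw [pb_nat a b ha hb] at h
    by_contra hc
    rw [Bool.not_eq_true] at hc
    exact hadm.1 a b ha hb1 ⟨h, hc⟩
  · rw [pb, dif_neg (by push_cast; omega)]

lemma pb_supp {x y : ℤ} (h : pb n p x y = false) (hx1 : 1 ≤ x) (hy1 : 1 ≤ y) :
    pb n p (x - 1) y = false ∨ pb n p (x - 1) (y - 1) = false := by
  obtain ⟨hx, hx', hy, hy'⟩ := pb_false_box h
  obtain ⟨a, rfl⟩ : ∃ a : ℕ, x = (a : ℤ) := ⟨x.toNat, by omega⟩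
  obtain ⟨b, rfl⟩ : ∃ b : ℕ, y = (b : ℤ) := ⟨y.toNat, by omega⟩
  have ha : a < n := by omega
  have hb : b < n := by omega
  have ha1 : 1 ≤ a := by omega
  have hb1 : 1 ≤ b := by omega
  have key := hadm.2 (a - 1) (b - 1) (by omega) (by omega)
  simp only [show a - 1 + 1 = a from by omega, show b - 1 + 1 = b from by omega] at key
  rw [pb_nat a b ha hb] at h
  have hbelow : p (⟨a, by omega⟩, ⟨b - 1, by omega⟩) = true := by
    by_contra hc
    rw [Bool.not_eq_true] at hc
    have h2 : pb n p (a : ℤ) ((b - 1 : ℕ) : ℤ) = false := by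
      rw [pb_nat a (b - 1) ha (by omega)]; exact hc
    have := pb_vert hadm h2
    rw [show (((b - 1 : ℕ) : ℤ) + 1) = ((b : ℕ) : ℤ) by omega] at this
    rw [pb_nat a b ha hb] at this
    rw [h] at this; simp at this
  rw [show ((a : ℤ) - 1) = ((a - 1 : ℕ) : ℤ) by omega,
      show ((b : ℤ) - 1) = ((b - 1 : ℕ) : ℤ) by omega,
      pb_nat (a - 1) b (by omega) hb, pb_nat (a - 1) (b - 1) (by omega) (by omega)]
  by_contra hc
  push_neg at hc
  obtain ⟨h1, h2⟩ := hc
  simp only [ne_eq, Bool.not_eq_false] at h1 h2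
  exact key ⟨h2, hbelow, h1, h⟩

/-- No `↓` directly above a `↓` in `del`. -/
lemma del_vert {x y : ℤ} (h : del n p (x, y) = false) : del n p (x, y + 1) = true := by
  have hy' : y < (n : ℤ) := del_false_lt h
  rcases lt_or_ge y 0 with hy | hy
  · -- diagonal region
    rw [del_neg hy] at h
    simp only [Bool.not_eq_false'] at h
    obtain ⟨hz1, hz2, hz3, hz4⟩ := isD0_range h
    rcases lt_or_ge (y + 1) 0 with hy1 | hy1
    · rw [del_neg hy1]
      cases hc : isD0 n p (x - (y + 1)) with
      | false => rfl
      | true =>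
        exfalso
        obtain ⟨hw1, hw2, hw3, hw4⟩ := isD0_range hc
        rw [show x - (y + 1) - 1 = x - y - 1 - 1 by ring] at hw3
        rw [show x - (y + 1) = x - y - 1 by ring] at hw4
        rw [hw4] at hz3
        simp at hz3
    · have hy0 : y = -1 := by omega
      subst hy0
      rw [show (-1 : ℤ) + 1 = 0 by ring]
      rw [del_mid le_rfl (by omega), show max x 0 = x by omega]
      rw [show x = x - (-1) - 1 by ring]
      exact hz3
  · -- box region
    rcases lt_or_ge (y + 1) (n : ℤ) with hy1 | hy1
    · rw [del_mid hy hy'] at h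
      rw [del_mid (by omega) hy1]
      exact pb_vert hadm h
    · exact del_hi hy1

/-- Every `↓` of `del` has a `↓` on its left or lower-left. -/
lemma del_supp {x y : ℤ} (h : del n p (x, y) = false) :
    del n p (x - 1, y) = false ∨ del n p (x - 1, y - 1) = false := by
  have hyn : y < (n : ℤ) := del_false_lt h
  rcases lt_or_ge y 0 with hy | hy
  · right
    rw [del_neg (by omega)]
    rw [del_neg hy] at h
    simp only [Bool.not_eq_false'] at h ⊢
    rw [show x - 1 - (y - 1) = x - y by ring]
    exact h
  · rw [del_mid hy hyn] at h
    rcases lt_or_ge x 1 with hx | hx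
    · left
      rw [del_mid hy hyn, show max (x - 1) 0 = 0 by omega]
      rw [show max x 0 = 0 by omega] at h
      exact h
    · rw [show max x 0 = x by omega] at h
      rcases lt_or_ge y 1 with hy1 | hy1
      · -- y = 0
        have hy0 : y = 0 := by omega
        subst hy0
        rcases hx0 : pb n p (x - 1) 0 with _ | _
        · left
          rw [del_mid le_rfl hyn, show max (x - 1) 0 = x - 1 by omega]
          exact hx0
        · right
          rw [del_neg (by omega)]
          simp only [Bool.not_eq_false']
          rw [show x - 1 - (0 - 1) = x by ring, isD0]
          simp [hx, hx0, h]
      · rcases pb_supp hadm h hx hy1 with hl | hd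
        · left
          rw [del_mid hy hyn, show max (x - 1) 0 = x - 1 by omega]
          exact hl
        · right
          rw [del_mid (by omega) (by omega), show max (x - 1) 0 = x - 1 by omega]
          exact hd

/-- `del` satisfies the rules of `Δ`. -/
lemma del_rules : DeltaRules (del n p) := by
  intro u
  obtain ⟨a, b⟩ := u
  constructor
  · rintro ⟨h1, h2⟩
    rw [show ((a,b) : ℤ × ℤ) + (0,1) = (a, b+1) by
      simp only [Prod.mk_add_mk, Prod.mk.injEq, and_true, true_and]; try omega] at h2
    rw [del_vert hadm h1] at h2
    simp at h2
  · rintro ⟨h1, h2, h3, h4⟩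
    rw [show ((a,b) : ℤ × ℤ) + (1,1) = (a+1, b+1) by
      simp only [Prod.mk_add_mk, Prod.mk.injEq, and_true, true_and]; try omega] at h4
    rcases del_supp hadm h4 with hl | hd
    · rw [show a + 1 - 1 = a by ring] at hl
      rw [show ((a,b) : ℤ × ℤ) + (0,1) = (a, b+1) by
        simp only [Prod.mk_add_mk, Prod.mk.injEq, and_true, true_and]; try omega] at h3
      rw [hl] at h3; simp at h3
    · rw [show a + 1 - 1 = a by ring, show b + 1 - 1 = b by ring] at hd
      rw [hd] at h1; simp at h1

omit hadm in
/-- A `↓` of `del` whose right and upper-right neighbours are `→` lies in the box. -/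
lemma del_max_box {x y : ℤ} (h : del n p (x, y) = false)
    (h1 : del n p (x + 1, y) = true) (h2 : del n p (x + 1, y + 1) = true) :
    0 ≤ x ∧ x < (n : ℤ) ∧ 0 ≤ y ∧ y < (n : ℤ) := by
  have hyn : y < (n : ℤ) := del_false_lt h
  rcases lt_or_ge y 0 with hy | hy
  · exfalso
    rw [del_neg hy] at h
    simp only [Bool.not_eq_false'] at h
    obtain ⟨hz1, hz2, hz3, hz4⟩ := isD0_range h
    rcases lt_or_ge (y + 1) 0 with hy1 | hy1
    · rw [del_neg hy1] at h2
      rw [show x + 1 - (y + 1) = x - y by ring, h] at h2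
      simp at h2
    · have hy0 : y = -1 := by omega
      rw [del_mid (by omega) (by omega)] at h2
      rw [show max (x+1) 0 = x + 1 by omega] at h2
      rw [show x + 1 = x - y by omega, show y + 1 = (0:ℤ) by omega, hz4] at h2
      simp at h2
  · rw [del_mid hy hyn] at h
    have hx0 : 0 ≤ x := by
      by_contra hc
      rw [del_mid hy hyn] at h1
      rw [show max (x+1) 0 = 0 by omega] at h1
      rw [show max x 0 = 0 by omega] at h
      rw [h] at h1; simp at h1
    rw [show max x 0 = x by omega] at h
    exact ⟨hx0, (pb_false_box h).2.1, hy, hyn⟩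

end Del

end Stmt12Aux

namespace Stmt12Aux

section Count

variable (n : ℕ) (p : Fin n × Fin n → Bool)

/-- Number of `↓`s in the column `x = -n` of `del` (all lie below height `n`). -/
noncomputable def dcol : ℕ := ((Finset.Icc (-2 * (n:ℤ)) ((n:ℤ) - 1)).filter
    (fun y => del n p (-(n:ℤ), y) = false)).card

noncomputable def boxFS : Finset (ℤ × ℤ) := Finset.Icc (0:ℤ) ((n:ℤ) - 1) ×ˢ Finset.Icc (0:ℤ) ((n:ℤ) - 1)

/-- The right-maximal `↓`s of `del` (they all lie in the box). -/
noncomputable def maxSet : Finset (ℤ × ℤ) := (boxFS n).filter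
  (fun c => del n p c = false ∧ del n p (c.1 + 1, c.2) = true ∧
    del n p (c.1 + 1, c.2 + 1) = true)

noncomputable def rr : ℕ := (maxSet n p).card

noncomputable def yT : ℤ := (n:ℤ) + dcol n p
noncomputable def wd : ℕ := 3 * n + 1 + rr n p
noncomputable def ht : ℕ := 3 * n + 1 + dcol n p

noncomputable def leftF : Finset ℤ :=
  (Finset.Icc (-2 * (n:ℤ)) (yT n p)).filter (fun y => del n p (-(n:ℤ), y) = true)

noncomputable def iSet : Finset (ℤ × ℤ) :=
  (leftF n p).image (fun y => (-(n:ℤ), y)) ∪ (maxSet n p).image (fun c => (c.1 + 1, c.2))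

variable {n p}

lemma mem_maxSet {c : ℤ × ℤ} :
    c ∈ maxSet n p ↔ (0 ≤ c.1 ∧ c.1 ≤ (n:ℤ) - 1 ∧ 0 ≤ c.2 ∧ c.2 ≤ (n:ℤ) - 1) ∧
      del n p c = false ∧ del n p (c.1 + 1, c.2) = true ∧
      del n p (c.1 + 1, c.2 + 1) = true := by
  simp only [maxSet, boxFS, Finset.mem_filter, Finset.mem_product, Finset.mem_Icc, and_assoc]

lemma start_mem_maxSet {i : ℤ × ℤ} (hst : IsStart (del n p) i) :
    (i.1 - 1, i.2) ∈ maxSet n p := by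
  obtain ⟨hT, hF, hU⟩ := hst
  have e : i.1 - 1 + 1 = i.1 := by ring
  have h1 : del n p (i.1 - 1 + 1, i.2) = true := by rw [e]; exact hT
  have h2 : del n p (i.1 - 1 + 1, i.2 + 1) = true := by rw [e]; exact hU
  have hbox := del_max_box hF h1 h2
  rw [mem_maxSet]
  exact ⟨⟨hbox.1, by omega, hbox.2.2.1, by omega⟩, hF, h1, h2⟩

lemma maxSet_start {c : ℤ × ℤ} (hc : c ∈ maxSet n p) :
    IsStart (del n p) (c.1 + 1, c.2) := by
  rw [mem_maxSet] at hc
  refine ⟨hc.2.2.1, ?_, hc.2.2.2⟩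
  simp only [show c.1 + 1 - 1 = c.1 by ring]
  exact hc.2.1

lemma dcol_le (hn : 1 ≤ n) : dcol n p ≤ 2 * n - 1 := by
  classical
  have hsub : (Finset.Icc (-2 * (n:ℤ)) ((n:ℤ) - 1)).filter
      (fun y => del n p (-(n:ℤ), y) = false) ⊆
      Finset.Icc (-2 * (n:ℤ) + 1) (-(n:ℤ) - 1) ∪ Finset.Icc (0:ℤ) ((n:ℤ) - 1) := by
    intro y hy
    simp only [Finset.mem_filter, Finset.mem_Icc] at hy
    obtain ⟨⟨h1, h2⟩, hF⟩ := hy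
    simp only [Finset.mem_union, Finset.mem_Icc]
    rcases lt_or_ge y 0 with hy0 | hy0
    · rw [del_neg hy0] at hF
      simp only [Bool.not_eq_false'] at hF
      obtain ⟨hz1, hz2, _, _⟩ := isD0_range hF
      left; omega
    · right; exact ⟨hy0, h2⟩
  have h1 := Finset.card_le_card hsub
  have h2 := Finset.card_union_le (Finset.Icc (-2 * (n:ℤ) + 1) (-(n:ℤ) - 1))
    (Finset.Icc (0:ℤ) ((n:ℤ) - 1))
  rw [Int.card_Icc, Int.card_Icc] at h2
  rw [dcol]
  omega

lemma card_leftF (hn : 1 ≤ n) : (leftF n p).card = 3 * n + 1 := by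
  classical
  have hsplit := Finset.card_filter_add_card_filter_not
    (s := Finset.Icc (-2 * (n:ℤ)) (yT n p)) (fun y => del n p (-(n:ℤ), y) = true)
  have hneg : (Finset.Icc (-2 * (n:ℤ)) (yT n p)).filter
      (fun y => ¬ (del n p (-(n:ℤ), y) = true)) =
      (Finset.Icc (-2 * (n:ℤ)) ((n:ℤ) - 1)).filter
      (fun y => del n p (-(n:ℤ), y) = false) := by
    ext y
    simp only [Finset.mem_filter, Finset.mem_Icc, Bool.not_eq_true]
    constructor
    · rintro ⟨⟨h1, h2⟩, h3⟩
      exact ⟨⟨h1, by have := del_false_lt h3; omega⟩, h3⟩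
    · rintro ⟨⟨h1, h2⟩, h3⟩
      refine ⟨⟨h1, ?_⟩, h3⟩
      have h4 : (0:ℤ) ≤ (dcol n p : ℤ) := by positivity
      simp only [yT]; omega
  rw [hneg] at hsplit
  have hL : (Finset.Icc (-2 * (n:ℤ)) (yT n p)).filter
      (fun y => del n p (-(n:ℤ), y) = true) = leftF n p := rfl
  have hD : ((Finset.Icc (-2 * (n:ℤ)) ((n:ℤ) - 1)).filter
      (fun y => del n p (-(n:ℤ), y) = false)).card = dcol n p := rfl
  rw [hL, hD] at hsplit
  have hcard : (Finset.Icc (-2 * (n:ℤ)) (yT n p)).card = 3 * n + 1 + dcol n p := by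
    rw [Int.card_Icc]
    simp only [yT]
    omega
  omega

lemma rr_le (hadm : LocallyAdmissible n p) (hn : 1 ≤ n) : rr n p ≤ 2 * n - 1 := by
  classical
  set Din : Finset (ℤ × ℤ) := (boxFS n).filter (fun c => del n p c = false) with hDin
  have hmemDin : ∀ c : ℤ × ℤ, c ∈ Din ↔
      (0 ≤ c.1 ∧ c.1 ≤ (n:ℤ) - 1 ∧ 0 ≤ c.2 ∧ c.2 ≤ (n:ℤ) - 1) ∧ del n p c = false := by
    intro c
    simp only [hDin, boxFS, Finset.mem_filter, Finset.mem_product, Finset.mem_Icc, and_assoc]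
  set nonorig : Finset (ℤ × ℤ) :=
    Din.filter (fun c => (c.1 - 1, c.2) ∈ Din ∨ (c.1 - 1, c.2 - 1) ∈ Din) with hnon
  set orig : Finset (ℤ × ℤ) :=
    Din.filter (fun c => ¬ ((c.1 - 1, c.2) ∈ Din ∨ (c.1 - 1, c.2 - 1) ∈ Din)) with horig
  set g : ℤ × ℤ → ℤ × ℤ :=
    fun c => if (c.1 - 1, c.2) ∈ Din then (c.1 - 1, c.2) else (c.1 - 1, c.2 - 1) with hg
  have hmax_sub : maxSet n p ⊆ Din := by
    intro c hc
    rw [mem_maxSet] at hc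
    rw [hmemDin]
    exact ⟨hc.1, hc.2.1⟩
  have hgmem : ∀ c ∈ nonorig, g c ∈ Din \ maxSet n p := by
    intro c hc
    rw [hnon, Finset.mem_filter] at hc
    obtain ⟨hcD, hsupp⟩ := hc
    rw [Finset.mem_sdiff]
    by_cases hmem1 : (c.1 - 1, c.2) ∈ Din
    · refine ⟨by simp only [hg, if_pos hmem1]; exact hmem1, ?_⟩
      simp only [hg, if_pos hmem1]
      intro hmem
      rw [mem_maxSet] at hmem
      have := hmem.2.2.1
      simp only at this
      rw [show c.1 - 1 + 1 = c.1 by ring] at this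
      rw [hmemDin] at hcD
      have hcF : del n p (c.1, c.2) = false := hcD.2
      rw [hcF] at this
      simp at this
    · have hmem2 : (c.1 - 1, c.2 - 1) ∈ Din := by
        rcases hsupp with h | h
        · exact absurd h hmem1
        · exact h
      refine ⟨by simp only [hg, if_neg hmem1]; exact hmem2, ?_⟩
      simp only [hg, if_neg hmem1]
      intro hmem
      rw [mem_maxSet] at hmem
      have := hmem.2.2.2
      simp only at this
      rw [show c.1 - 1 + 1 = c.1 by ring, show c.2 - 1 + 1 = c.2 by ring] at this
      rw [hmemDin] at hcD
      have hcF : del n p (c.1, c.2) = false := hcD.2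
      rw [hcF] at this
      simp at this
  have hginj : Set.InjOn g nonorig := by
    intro c hc c' hc' he
    rw [Finset.mem_coe, hnon, Finset.mem_filter] at hc hc'
    have hF : del n p c = false := ((hmemDin c).mp hc.1).2
    have hF' : del n p c' = false := ((hmemDin c').mp hc'.1).2
    by_cases h1 : (c.1 - 1, c.2) ∈ Din <;> by_cases h2 : (c'.1 - 1, c'.2) ∈ Din
    · simp only [hg, if_pos h1, if_pos h2, Prod.mk.injEq] at he
      have : c.1 = c'.1 := by omega
      exact Prod.ext this he.2
    · simp only [hg, if_pos h1, if_neg h2, Prod.mk.injEq] at he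
      exfalso
      -- c = (s.1+1, s.2), c' = (s.1+1, s.2+1); c' is directly above c
      have hx : c'.1 = c.1 := by omega
      have hy : c'.2 = c.2 + 1 := by omega
      have := del_vert hadm (show del n p (c.1, c.2) = false from hF)
      rw [← hx, ← hy] at this
      rw [show ((c'.1, c'.2) : ℤ × ℤ) = c' from rfl] at this
      rw [hF'] at this; simp at this
    · simp only [hg, if_neg h1, if_pos h2, Prod.mk.injEq] at he
      exfalso
      have hx : c.1 = c'.1 := by omega
      have hy : c.2 = c'.2 + 1 := by omega
      have := del_vert hadm (show del n p (c'.1, c'.2) = false from hF')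
      rw [← hx, ← hy] at this
      rw [show ((c.1, c.2) : ℤ × ℤ) = c from rfl] at this
      rw [hF] at this; simp at this
    · simp only [hg, if_neg h1, if_neg h2, Prod.mk.injEq] at he
      have : c.1 = c'.1 := by omega
      have h2' : c.2 = c'.2 := by omega
      exact Prod.ext this h2'
  have hcard1 : nonorig.card ≤ (Din \ maxSet n p).card :=
    Finset.card_le_card_of_injOn g hgmem hginj
  have hcard2 : (Din \ maxSet n p).card = Din.card - rr n p := by
    rw [Finset.card_sdiff_of_subset hmax_sub]; rfl
  have hcard3 : orig.card + nonorig.card = Din.card := by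
    rw [horig, hnon]
    rw [add_comm]
    exact Finset.card_filter_add_card_filter_not _
  have hrr_le_orig : rr n p ≤ orig.card := by
    have hmax_le : rr n p ≤ Din.card := Finset.card_le_card hmax_sub
    omega
  have horig_sub : orig ⊆ ({(0:ℤ)} ×ˢ Finset.Icc (0:ℤ) ((n:ℤ) - 1)) ∪
      (Finset.Icc (0:ℤ) ((n:ℤ) - 1) ×ˢ {(0:ℤ)}) := by
    intro c hc
    rw [horig, Finset.mem_filter] at hc
    obtain ⟨hcD, hno⟩ := hc
    rw [hmemDin] at hcD
    obtain ⟨⟨hx0, hx1, hy0, hy1⟩, hF⟩ := hcD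
    simp only [Finset.mem_union, Finset.mem_product, Finset.mem_singleton, Finset.mem_Icc]
    by_cases hxx : c.1 = 0
    · exact Or.inl ⟨hxx, hy0, hy1⟩
    by_cases hyy : c.2 = 0
    · exact Or.inr ⟨⟨hx0, hx1⟩, hyy⟩
    exfalso
    have hx : 1 ≤ c.1 := by omega
    have hy : 1 ≤ c.2 := by omega
    have hFp : pb n p c.1 c.2 = false := by
      rw [← del_box hx0 hy0 (by omega)]
      exact hF
    rcases pb_supp hadm hFp hx hy with hl | hd
    · apply hno; left
      rw [hmemDin]
      have hb := pb_false_box hl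
      refine ⟨⟨by omega, by omega, by omega, by omega⟩, ?_⟩
      rw [del_box (by omega) (by omega) (by omega)]
      exact hl
    · apply hno; right
      rw [hmemDin]
      have hb := pb_false_box hd
      refine ⟨⟨by omega, by omega, by omega, by omega⟩, ?_⟩
      rw [del_box (by omega) (by omega) (by omega)]
      exact hd
  have horig_card : orig.card ≤ 2 * n - 1 := by
    have h1 := Finset.card_le_card horig_sub
    have h2 := Finset.card_union_add_card_inter
      ({(0:ℤ)} ×ˢ Finset.Icc (0:ℤ) ((n:ℤ) - 1))
      (Finset.Icc (0:ℤ) ((n:ℤ) - 1) ×ˢ {(0:ℤ)})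
    have h3 : ((0:ℤ), (0:ℤ)) ∈ ({(0:ℤ)} ×ˢ Finset.Icc (0:ℤ) ((n:ℤ) - 1)) ∩
        (Finset.Icc (0:ℤ) ((n:ℤ) - 1) ×ˢ {(0:ℤ)}) := by
      simp only [Finset.mem_inter, Finset.mem_product, Finset.mem_singleton, Finset.mem_Icc]
      refine ⟨⟨trivial, le_refl 0, by omega⟩, ⟨le_refl 0, by omega⟩, trivial⟩
    have h4 : 0 < (({(0:ℤ)} ×ˢ Finset.Icc (0:ℤ) ((n:ℤ) - 1)) ∩
        (Finset.Icc (0:ℤ) ((n:ℤ) - 1) ×ˢ {(0:ℤ)})).card :=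
      Finset.card_pos.mpr ⟨_, h3⟩
    have h5 : ({(0:ℤ)} ×ˢ Finset.Icc (0:ℤ) ((n:ℤ) - 1)).card = n := by
      rw [Finset.card_product, Finset.card_singleton, Int.card_Icc]
      omega
    have h6 : (Finset.Icc (0:ℤ) ((n:ℤ) - 1) ×ˢ {(0:ℤ)}).card = n := by
      rw [Finset.card_product, Finset.card_singleton, Int.card_Icc]
      omega
    omega
  omega

end Count

end Stmt12Aux

namespace Stmt12Aux

section Walk

variable {n : ℕ} {p : Fin n × Fin n → Bool}

lemma pred_cases (δ : Config Bool) (a b : ℤ) :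
    predPos δ (a, b) = (a - 1, b) ∨
      (predPos δ (a, b) = (a - 1, b + 1) ∧ δ (a - 1, b) = false) := by
  rw [pred_pair]
  by_cases h : δ (a - 1, b) = true
  · left; rw [if_pos h]
  · right
    rw [if_neg h]
    exact ⟨rfl, by simpa using h⟩

lemma isD0_ge {z : ℤ} (hz : (n : ℤ) ≤ z) : isD0 n p z = false := by
  cases h : isD0 n p z with
  | false => rfl
  | true => have := isD0_range h; omega

lemma iSet_true {j : ℤ × ℤ} (hj : j ∈ iSet n p) : del n p j = true := by
  rw [iSet, Finset.mem_union] at hj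
  rcases hj with hj | hj
  · rw [Finset.mem_image] at hj
    obtain ⟨y, hy, rfl⟩ := hj
    rw [leftF, Finset.mem_filter] at hy
    exact hy.2
  · rw [Finset.mem_image] at hj
    obtain ⟨c, hc, rfl⟩ := hj
    exact (mem_maxSet.mp hc).2.2.1

lemma iSet_bounds (hn : 1 ≤ n) {j : ℤ × ℤ} (hj : j ∈ iSet n p) :
    -(n:ℤ) ≤ j.1 ∧ j.1 < -(n:ℤ) + wd n p ∧
      -2 * (n:ℤ) ≤ j.2 ∧ j.2 < -2 * (n:ℤ) + ht n p := by
  rw [iSet, Finset.mem_union] at hj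
  rcases hj with hj | hj
  · rw [Finset.mem_image] at hj
    obtain ⟨y, hy, rfl⟩ := hj
    rw [leftF, Finset.mem_filter, Finset.mem_Icc] at hy
    obtain ⟨⟨h1, h2⟩, _⟩ := hy
    simp only [yT] at h2
    refine ⟨le_refl _, ?_, h1, ?_⟩
    · show -(n:ℤ) < -(n:ℤ) + (wd n p : ℤ)
      simp only [wd]; push_cast; omega
    · show y < -2 * (n:ℤ) + (ht n p : ℤ)
      simp only [ht]; push_cast; omega
  · rw [Finset.mem_image] at hj
    obtain ⟨c, hc, rfl⟩ := hj
    obtain ⟨⟨h1, h2, h3, h4⟩, _⟩ := mem_maxSet.mp hc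
    refine ⟨?_, ?_, ?_, ?_⟩
    · show -(n:ℤ) ≤ c.1 + 1
      omega
    · show c.1 + 1 < -(n:ℤ) + (wd n p : ℤ)
      simp only [wd]; push_cast; omega
    · show -2 * (n:ℤ) ≤ c.2
      omega
    · show c.2 < -2 * (n:ℤ) + (ht n p : ℤ)
      simp only [ht]; push_cast; omega

lemma iSet_left {j : ℤ × ℤ} (hj : j ∈ iSet n p) :
    j.1 = -(n:ℤ) ∨ (IsStart (del n p) j ∧ 1 ≤ j.1) := by
  rw [iSet, Finset.mem_union] at hj
  rcases hj with hj | hj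
  · rw [Finset.mem_image] at hj
    obtain ⟨y, _, rfl⟩ := hj
    exact Or.inl rfl
  · rw [Finset.mem_image] at hj
    obtain ⟨c, hc, rfl⟩ := hj
    refine Or.inr ⟨maxSet_start hc, ?_⟩
    have := (mem_maxSet.mp hc).1.1
    simp only
    omega

lemma walk (hadm : LocallyAdmissible n p) (hn : 1 ≤ n) :
    ∀ (k : ℕ) (b : ℤ), del n p (-(n:ℤ) + (k:ℤ), b) = true →
      -2 * (n:ℤ) ≤ b → b ≤ yT n p →
      ∃ j ∈ iSet n p, Good (del n p) (-(n:ℤ) + (k:ℤ), b) j := by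
  have hδ : DeltaRules (del n p) := del_rules hadm
  intro k
  induction k with
  | zero =>
    intro b hT h1 h2
    refine ⟨(-(n:ℤ), b), ?_, ?_⟩
    · rw [iSet, Finset.mem_union]
      left
      rw [Finset.mem_image]
      refine ⟨b, ?_, rfl⟩
      rw [leftF, Finset.mem_filter, Finset.mem_Icc]
      exact ⟨⟨h1, h2⟩, by simpa using hT⟩
    · have : -(n:ℤ) + ((0:ℕ):ℤ) = -(n:ℤ) := by simp
      rw [this]
      exact good_refl _
  | succ k ih =>
    intro b hT h1 h2
    have hkc : -(n:ℤ) + ((k+1:ℕ):ℤ) = -(n:ℤ) + (k:ℤ) + 1 := by push_cast; ring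
    rw [hkc] at hT ⊢
    set a : ℤ := -(n:ℤ) + (k:ℤ) + 1 with ha
    by_cases hst : IsStart (del n p) (a, b)
    · refine ⟨(a, b), ?_, good_refl _⟩
      rw [iSet, Finset.mem_union]
      right
      rw [Finset.mem_image]
      refine ⟨(a - 1, b), start_mem_maxSet hst, ?_⟩
      simp only
      rw [show a - 1 + 1 = a by ring]
    · have hgi : Good (del n p) (a, b) (predPos (del n p) (a, b)) :=
        Or.inr ⟨hT, pred_true hδ hT, 0, 1, by
          simp only [Function.iterate_one, Function.iterate_zero, id_eq]
          exact (succ_pred hδ hT hst).symm⟩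
      rcases pred_cases (del n p) a b with hc | ⟨hc, hFF⟩
      · have hT' : del n p (a - 1, b) = true := by
          have := pred_true hδ hT
          rwa [hc] at this
        have he : a - 1 = -(n:ℤ) + (k:ℤ) := by rw [ha]; ring
        rw [he] at hT' hc
        obtain ⟨j, hj, hGood⟩ := ih b hT' h1 h2
        exact ⟨j, hj, good_trans hgi (hc ▸ hGood)⟩
      · have hT' : del n p (a - 1, b + 1) = true := by
          have := pred_true hδ hT
          rwa [hc] at this
        have hblt : b < (n:ℤ) := del_false_lt hFF
        have he : a - 1 = -(n:ℤ) + (k:ℤ) := by rw [ha]; ring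
        rw [he] at hT' hc
        have h2' : b + 1 ≤ yT n p := by
          simp only [yT]
          have : (0:ℤ) ≤ (dcol n p : ℤ) := by positivity
          omega
        obtain ⟨j, hj, hGood⟩ := ih (b + 1) hT' (by omega) h2'
        exact ⟨j, hj, good_trans hgi (hc ▸ hGood)⟩

lemma card_iSet (hn : 1 ≤ n) : (iSet n p).card = wd n p := by
  classical
  rw [iSet]
  have hinj1 : Function.Injective (fun y : ℤ => ((-(n:ℤ), y) : ℤ × ℤ)) := by
    intro x y h
    simpa [Prod.mk.injEq] using h
  have hinj2 : Function.Injective (fun c : ℤ × ℤ => ((c.1 + 1, c.2) : ℤ × ℤ)) := by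
    intro x y h
    rw [Prod.mk.injEq] at h
    exact Prod.ext (by omega) h.2
  have hdisj : Disjoint ((leftF n p).image (fun y => ((-(n:ℤ), y) : ℤ × ℤ)))
      ((maxSet n p).image (fun c => ((c.1 + 1, c.2) : ℤ × ℤ))) := by
    rw [Finset.disjoint_left]
    intro a ha hb
    rw [Finset.mem_image] at ha hb
    obtain ⟨y, _, rfl⟩ := ha
    obtain ⟨c, hc, hcc⟩ := hb
    have := (mem_maxSet.mp hc).1.1
    rw [Prod.mk.injEq] at hcc
    omega
  rw [Finset.card_union_of_disjoint hdisj, Finset.card_image_of_injective _ hinj1,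
      Finset.card_image_of_injective _ hinj2, card_leftF hn]
  rfl

lemma curves_count (hadm : LocallyAdmissible n p) (hn : 1 ≤ n) :
    (curvesThrough (del n p)
      ((fun s => ((-(n:ℤ), -2 * (n:ℤ)) : ℤ × ℤ) + s) '' rectSet (wd n p) (ht n p))).ncard
      = wd n p := by
  classical
  have hδ : DeltaRules (del n p) := del_rules hadm
  set S : Set (ℤ × ℤ) :=
    (fun s => ((-(n:ℤ), -2 * (n:ℤ)) : ℤ × ℤ) + s) '' rectSet (wd n p) (ht n p) with hS
  have hmemS : ∀ v : ℤ × ℤ, v ∈ S ↔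
      (-(n:ℤ) ≤ v.1 ∧ v.1 < -(n:ℤ) + wd n p ∧
        -2 * (n:ℤ) ≤ v.2 ∧ v.2 < -2 * (n:ℤ) + ht n p) := by
    intro v
    rw [hS]
    simp only [Set.mem_image, rectSet, Set.mem_setOf_eq]
    constructor
    · rintro ⟨⟨s1, s2⟩, ⟨hs1, hs2, hs3, hs4⟩, rfl⟩
      simp only [Prod.mk_add_mk] at hs1 hs2 hs3 hs4 ⊢
      refine ⟨?_, ?_, ?_, ?_⟩
      · show -(n:ℤ) ≤ -(n:ℤ) + s1
        omega
      · show -(n:ℤ) + s1 < -(n:ℤ) + (wd n p : ℤ)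
        omega
      · show -2 * (n:ℤ) ≤ -2 * (n:ℤ) + s2
        omega
      · show -2 * (n:ℤ) + s2 < -2 * (n:ℤ) + (ht n p : ℤ)
        omega
    · rintro ⟨h1, h2, h3, h4⟩
      refine ⟨(v.1 + (n:ℤ), v.2 + 2 * (n:ℤ)), ⟨by omega, by omega, by omega, by omega⟩, ?_⟩
      rw [Prod.mk_add_mk, show -(n:ℤ) + (v.1 + (n:ℤ)) = v.1 by ring,
        show -2 * (n:ℤ) + (v.2 + 2 * (n:ℤ)) = v.2 by ring]
  have hset : curvesThrough (del n p) S = (fun i => curveOf (del n p) i) '' ↑(iSet n p) := by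
    ext c
    simp only [curvesThrough, Set.mem_setOf_eq, Set.mem_image, Finset.mem_coe]
    constructor
    · rintro ⟨i, hiS, hiT, rfl⟩
      rw [hmemS] at hiS
      obtain ⟨h1, h2, h3, h4⟩ := hiS
      obtain ⟨k, hk⟩ : ∃ k : ℕ, i.1 = -(n:ℤ) + (k:ℤ) := ⟨(i.1 + n).toNat, by omega⟩
      have hTT : del n p (-(n:ℤ) + (k:ℤ), i.2) = true := by
        rw [← hk]
        exact hiT
      have h4' : i.2 ≤ yT n p := by
        simp only [ht] at h4
        simp only [yT]
        push_cast at h4 ⊢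
        omega
      obtain ⟨j, hj, hGood⟩ := walk hadm hn k i.2 hTT h3 h4'
      have hie : ((-(n:ℤ) + (k:ℤ), i.2) : ℤ × ℤ) = i := Prod.ext (by omega) rfl
      rw [hie] at hGood
      exact ⟨j, hj, (curveOf_eq_of_eqvGen (good_imp_eqvGen hδ hGood)).symm ▸ rfl⟩
    · rintro ⟨j, hjI, rfl⟩
      refine ⟨j, ?_, iSet_true hjI, rfl⟩
      rw [hmemS]
      exact iSet_bounds hn hjI
  have hinj : Set.InjOn (fun i => curveOf (del n p) i) ↑(iSet n p) := by
    intro i hi j hj he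
    rw [Finset.mem_coe] at hi hj
    have hGood := eqvGen_imp_good hδ (eqvGen_of_curveOf_eq he)
    have hiT := iSet_true hi
    have hjT := iSet_true hj
    obtain ⟨c, hc⟩ := good_cases hδ hiT hjT hGood
    rcases iSet_left hi with hileft | ⟨histart, hige⟩ <;>
      rcases iSet_left hj with hjleft | ⟨hjstart, hjge⟩
    · rcases hc with hc | hc
      · have := iter_fst (δ := del n p) i c
        rw [hc] at this
        have hc0 : c = 0 := by omega
        rw [hc0] at hc
        simpa using hc
      · have := iter_fst (δ := del n p) j c
        rw [hc] at this
        have hc0 : c = 0 := by omega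
        rw [hc0] at hc
        exact (by simpa using hc : j = i).symm
    · rcases hc with hc | hc
      · have hc0 := start_iter_zero hδ hiT hjstart c hc
        rw [hc0] at hc
        simpa using hc
      · exfalso
        have := iter_fst (δ := del n p) j c
        rw [hc] at this
        have hn1 : (1:ℤ) ≤ (n:ℤ) := by exact_mod_cast hn
        omega
    · rcases hc with hc | hc
      · exfalso
        have := iter_fst (δ := del n p) i c
        rw [hc] at this
        have hn1 : (1:ℤ) ≤ (n:ℤ) := by exact_mod_cast hn
        omega
      · have hc0 := start_iter_zero hδ hjT histart c hc
        rw [hc0] at hc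
        exact (by simpa using hc : j = i).symm
    · rcases hc with hc | hc
      · have hc0 := start_iter_zero hδ hiT hjstart c hc
        rw [hc0] at hc
        simpa using hc
      · have hc0 := start_iter_zero hδ hjT histart c hc
        rw [hc0] at hc
        exact (by simpa using hc : j = i).symm
  rw [hset, Set.ncard_image_of_injOn hinj, Set.ncard_coe_finset, card_iSet hn]

end Walk

end Stmt12Aux


open Stmt12Aux in
/-- Every locally admissible `n`-block of `Δ` extends to a rectangular pattern, of width
and height at most `5n`, appearing in a configuration of `Δ`, whose top and bottom rows
consist only of `→`-symbols and which is crossed by as many curves as it has columns. -/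
theorem stmt12 (n : ℕ) (hn : 1 ≤ n) (p : Fin n × Fin n → Bool)
    (hadm : LocallyAdmissible n p) :
    ∃ δ : Config Bool, DeltaRules δ ∧
      ∃ (u : ℤ × ℤ) (w h : ℕ), 1 ≤ w ∧ 1 ≤ h ∧ w ≤ 5 * n ∧ h ≤ 5 * n ∧
        (∃ t : ℤ × ℤ, (∀ v ∈ boxSet n, t + v ∈ rectSet w h) ∧
          ∀ v : Fin n × Fin n, δ (u + t + (((v.1 : ℕ) : ℤ), ((v.2 : ℕ) : ℤ))) = p v) ∧
        (∀ i : ℕ, i < w →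
          δ (u + ((i : ℤ), 0)) = true ∧ δ (u + ((i : ℤ), (h : ℤ) - 1)) = true) ∧
        (curvesThrough δ ((fun s => u + s) '' rectSet w h)).ncard = w := by
  refine ⟨del n p, del_rules hadm, (-(n:ℤ), -2 * (n:ℤ)), wd n p, ht n p,
    ?_, ?_, ?_, ?_, ?_, ?_, ?_⟩
  · simp only [wd]; omega
  · simp only [ht]; omega
  · have := rr_le hadm hn
    simp only [wd]; omega
  · have := dcol_le (p := p) hn
    simp only [ht]; omega
  · refine ⟨((n:ℤ), 2 * (n:ℤ)), ?_, ?_⟩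
    · rintro ⟨v1, v2⟩ ⟨h1, h2, h3, h4⟩
      simp only at h1 h2 h3 h4
      rw [Prod.mk_add_mk]
      refine ⟨?_, ?_, ?_, ?_⟩
      · show (0:ℤ) ≤ (n:ℤ) + v1
        omega
      · show (n:ℤ) + v1 < (wd n p : ℤ)
        simp only [wd]; push_cast; omega
      · show (0:ℤ) ≤ 2 * (n:ℤ) + v2
        omega
      · show 2 * (n:ℤ) + v2 < (ht n p : ℤ)
        simp only [ht]; push_cast; omega
    · intro v
      have he : ((-(n:ℤ), -2 * (n:ℤ)) : ℤ × ℤ) + ((n:ℤ), 2 * (n:ℤ)) +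
          (((v.1 : ℕ) : ℤ), ((v.2 : ℕ) : ℤ)) = (((v.1 : ℕ) : ℤ), ((v.2 : ℕ) : ℤ)) := by
        rw [Prod.mk_add_mk, Prod.mk_add_mk]
        refine Prod.ext ?_ ?_ <;> (show _ = _ ; push_cast; ring)
      rw [he]
      have hv1 : ((v.1 : ℕ) : ℤ) < (n : ℤ) := by exact_mod_cast v.1.isLt
      have hv2 : ((v.2 : ℕ) : ℤ) < (n : ℤ) := by exact_mod_cast v.2.isLt
      rw [del_box (by positivity) (by positivity) hv2,
        pb_nat (v.1 : ℕ) (v.2 : ℕ) v.1.isLt v.2.isLt]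
  · intro i hi
    constructor
    · rw [Prod.mk_add_mk]
      rw [del_neg (by omega)]
      rw [show -(n:ℤ) + (i:ℤ) - (-2 * (n:ℤ) + 0) = (n:ℤ) + (i:ℤ) by ring]
      rw [isD0_ge (by omega)]
      rfl
    · rw [Prod.mk_add_mk]
      apply del_hi
      have : ((ht n p : ℕ) : ℤ) = 3 * (n:ℤ) + 1 + (dcol n p : ℤ) := by
        simp only [ht]; push_cast; ring
      omega
  · exact curves_count hadm hn
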